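/- Let k be a multiple of 4 with k ≥ 8. Then every coloring χ : {1,…,4k−5} → ℤ/4ℤ admits a 4-zero-sum solution to the equation E; equivalently, S_z(k,4) ≤ 4k − 5. -/

import Mathlib

/-- `hasZeroSumSolution k r N χ` says the coloring `χ` of `{1,…,N}` by `ZMod r`
admits an `r`-zero-sum solution to `x₁ + ⋯ + x_{k-1} = x_k`. -/
def hasZeroSumSolution (k r N : ℕ) (χ : ℕ → ZMod r) : Prop :=
  ∃ (x : Fin (k - 1) → ℕ) (y : ℕ),
    (∀ i, 1 ≤ x i ∧ x i ≤ N) ∧ (1 ≤ y ∧ y ≤ N) ∧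
    (∑ i, x i) = y ∧
    (∑ i, χ (x i)) + χ y = 0

private lemma sum_range_getD {M : Type*} [AddCommMonoid M] (f : ℕ → M) :
    ∀ (L : List ℕ) (n : ℕ), L.length = n →
      ∑ i ∈ Finset.range n, f (L.getD i 1) = (L.map f).sum := by
  intro L
  induction L with
  | nil =>
    intro n h
    simp only [List.length_nil] at h
    subst h
    simp
  | cons a T ih =>
    intro n h
    simp only [List.length_cons] at h
    subst h
    rw [Finset.sum_range_succ']
    simp only [List.getD_cons_succ, List.getD_cons_zero]
    rw [ih T.length rfl, List.map_cons, List.sum_cons, add_comm]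

private lemma getD_cases (M : List ℕ) (i : ℕ) : M.getD i 1 = 1 ∨ M.getD i 1 ∈ M := by
  induction M generalizing i with
  | nil => left; simp
  | cons a T ih =>
    cases i with
    | zero => right; rw [List.getD_cons_zero]; exact List.mem_cons_self
    | succ j =>
      rcases ih j with h | h
      · left; rwa [List.getD_cons_succ]
      · right; rw [List.getD_cons_succ]; exact List.mem_cons_of_mem _ h

private lemma ne0_cases : ∀ a : ZMod 4, a ≠ 0 → a = 2 ∨ (a = 1 ∨ a = 3) := by decide
private lemma odd_ne_zero : ∀ a : ZMod 4, (a = 1 ∨ a = 3) → a ≠ 0 := by decide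
private lemma odd_ne_two : ∀ a : ZMod 4, (a = 1 ∨ a = 3) → a ≠ 2 := by decide
private lemma not_odd_even : ∀ a : ZMod 4, ¬(a = 1 ∨ a = 3) → a = 0 ∨ a = 2 := by decide
private lemma even_ne0 : ∀ a : ZMod 4, (a = 0 ∨ a = 2) → a ≠ 0 → a = 2 := by decide
private lemma two_add_two : (2 : ZMod 4) + 2 = 0 := by decide

private lemma finE0 : ∀ w v : ZMod 4, (w = 1 ∨ w = 3) → 0 + 0 + 0 + v ≠ 0 →
    w + 0 + 0 + v ≠ 0 → w + w + 0 + v ≠ 0 → w + w + w + v ≠ 0 → False := by decide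
private lemma finE1 : ∀ w v : ZMod 4, (w = 1 ∨ w = 3) → w + v ≠ 0 → w + 2 + v ≠ 0 →
    2 + 0 + v ≠ 0 → 0 + 0 + v ≠ 0 → False := by decide
private lemma finE2 : ∀ w v : ZMod 4, (w = 1 ∨ w = 3) → w + v ≠ 0 → w + 2 + v ≠ 0 →
    2 + 2 + v ≠ 0 → 2 + 0 + v ≠ 0 → False := by decide
private lemma finE3 : ∀ w v : ZMod 4, (w = 1 ∨ w = 3) → w + v ≠ 0 → w + 2 + v ≠ 0 →
    2 + 2 + v ≠ 0 → 2 + 2 + 2 + v ≠ 0 → False := by decide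

private lemma caseE (k : ℕ) (hk : 8 ≤ k) (ψ : ℕ → ZMod 4)
    (hψ1 : ψ 1 = 0) (hψ2 : ψ 2 = 0)
    (R0 : ∀ y, k ≤ y + 1 → y + 2 ≤ 2 * k → ψ y ≠ 0)
    (R1 : ∀ n y, 1 ≤ n → n + k ≤ y + 2 → y + 4 ≤ n + 2 * k → y + 5 ≤ 4 * k →
      ψ n + ψ y ≠ 0)
    (R2 : ∀ n1 n2 y, 1 ≤ n1 → 1 ≤ n2 → n1 + n2 + k ≤ y + 3 → y + 6 ≤ n1 + n2 + 2 * k →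
      y + 5 ≤ 4 * k → ψ n1 + ψ n2 + ψ y ≠ 0)
    (R3 : ∀ n1 n2 n3 y, 1 ≤ n1 → 1 ≤ n2 → 1 ≤ n3 → n1 + n2 + n3 + k ≤ y + 4 →
      y + 8 ≤ n1 + n2 + n3 + 2 * k → y + 5 ≤ 4 * k → ψ n1 + ψ n2 + ψ n3 + ψ y ≠ 0) :
    False := by
  classical
  have hex : ∃ n, 1 ≤ n ∧ ψ n ≠ 0 := ⟨k - 1, by omega, R0 (k - 1) (by omega) (by omega)⟩
  set s := Nat.find hex with hsdef
  obtain ⟨hs1, hsw⟩ : 1 ≤ s ∧ ψ s ≠ 0 := Nat.find_spec hex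
  have hmin : ∀ mm, 1 ≤ mm → mm < s → ψ mm = 0 := by
    intro mm h1 h2
    by_contra h
    exact Nat.find_min hex h2 ⟨h1, h⟩
  have hs3 : 3 ≤ s := by
    rcases (show s = 1 ∨ s = 2 ∨ 3 ≤ s by omega) with h | h | h
    · exact absurd (h ▸ hsw) (by simp [hψ1])
    · exact absurd (h ▸ hsw) (by simp [hψ2])
    · exact h
  have hsk : s ≤ k - 1 := Nat.find_min' hex ⟨by omega, R0 (k - 1) (by omega) (by omega)⟩
  rcases ne0_cases (ψ s) hsw with hw2 | hwodd
  · -- ψ s = 2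
    have hodd_ex : ∃ n, 1 ≤ n ∧ (ψ n = 1 ∨ ψ n = 3) := by
      by_contra hno
      push_neg at hno
      have e1 : ψ (k - 1) = 2 :=
        even_ne0 _ (not_odd_even _ (by
          intro h; rcases h with h | h
          · exact (hno (k-1) (by omega)).1 h
          · exact (hno (k-1) (by omega)).2 h))
          (R0 (k - 1) (by omega) (by omega))
      have e2 : ψ (2 * k - 3) = 2 :=
        even_ne0 _ (not_odd_even _ (by
          intro h; rcases h with h | h
          · exact (hno (2*k-3) (by omega)).1 h
          · exact (hno (2*k-3) (by omega)).2 h))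
          (R0 (2 * k - 3) (by omega) (by omega))
      have := R1 (k - 1) (2 * k - 3) (by omega) (by omega) (by omega) (by omega)
      rw [e1, e2] at this
      exact this two_add_two
    set o := Nat.find hodd_ex with hodef
    obtain ⟨ho1, hoodd⟩ : 1 ≤ o ∧ (ψ o = 1 ∨ ψ o = 3) := Nat.find_spec hodd_ex
    have hobel : ∀ mm, 1 ≤ mm → mm < o → ψ mm = 0 ∨ ψ mm = 2 := by
      intro mm h1 h2
      refine not_odd_even _ (fun hh => ?_)
      exact Nat.find_min hodd_ex h2 ⟨h1, hh⟩
    have hso : s < o := by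
      have hle : s ≤ o := Nat.find_min' hex ⟨ho1, odd_ne_zero _ hoodd⟩
      rcases eq_or_lt_of_le hle with h | h
      · exact absurd (h ▸ hw2) (odd_ne_two _ hoodd)
      · exact h
    have ho4 : 4 ≤ o := by omega
    have ho2k : o ≤ 2 * k - 3 := by
      by_contra hq
      push_neg at hq
      have e1 : ψ (k - 1) = 2 :=
        even_ne0 _ (hobel (k-1) (by omega) (by omega)) (R0 (k - 1) (by omega) (by omega))
      have e2 : ψ (2 * k - 3) = 2 :=
        even_ne0 _ (hobel (2*k-3) (by omega) (by omega)) (R0 (2*k-3) (by omega) (by omega))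
      have := R1 (k - 1) (2 * k - 3) (by omega) (by omega) (by omega) (by omega)
      rw [e1, e2] at this
      exact this two_add_two
    have hko : k ≤ o → ψ (k - 1) = 2 := fun h =>
      even_ne0 _ (hobel (k-1) (by omega) (by omega)) (R0 (k - 1) (by omega) (by omega))
    have K1 := R1 o (o + 2 * k - 4) (by omega) (by omega) (by omega) (by omega)
    have K2 : ψ o + 2 + ψ (o + 2 * k - 4) ≠ 0 := by
      rcases le_or_gt k o with h | h
      · have h3 := R3 o (k - 1) 1 (o + 2 * k - 4) (by omega) (by omega) (by omega)
          (by omega) (by omega) (by omega)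
        rw [hko h, hψ1] at h3
        intro hE
        exact h3 (by linear_combination hE)
      · have h3 := R3 o s 1 (o + 2 * k - 4) (by omega) (by omega) (by omega)
          (by omega) (by omega) (by omega)
        rw [hw2, hψ1] at h3
        intro hE
        exact h3 (by linear_combination hE)
    have KA := R2 s (o - 1) (o + 2 * k - 4) (by omega) (by omega) (by omega) (by omega)
      (by omega)
    rw [hw2] at KA
    rcases hobel (o - 1) (by omega) (by omega) with hov | hov
    · -- ψ (o-1) = 0
      have hok : o ≤ k := by
        by_contra hq
        push_neg at hq
        exact R0 (o - 1) (by omega) (by omega) hov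
      have KB := R2 (o - 1) (o - 1) (o + 2 * k - 4) (by omega) (by omega) (by omega)
        (by omega) (by omega)
      rw [hov] at KA KB
      exact finE1 (ψ o) (ψ (o + 2 * k - 4)) hoodd K1 K2 KA KB
    · -- ψ (o-1) = 2
      rw [hov] at KA
      rcases le_or_gt 4 s with hs4 | hs4
      · have KC := R2 (o - 1) 3 (o + 2 * k - 4) (by omega) (by omega) (by omega)
          (by omega) (by omega)
        rw [hov, hmin 3 (by omega) (by omega)] at KC
        exact finE2 (ψ o) (ψ (o + 2 * k - 4)) hoodd K1 K2 KA KC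
      · have hs3' : s = 3 := by omega
        have hψ3 : ψ 3 = 2 := hs3' ▸ hw2
        have KX : 2 + 2 + 2 + ψ (o + 2 * k - 4) ≠ 0 := by
          rcases lt_or_ge o k with h1 | h1
          · have KD := R3 3 (o - 1) (o - 1) (o + 2 * k - 4) (by omega) (by omega)
              (by omega) (by omega) (by omega) (by omega)
            rwa [hψ3, hov] at KD
          · rcases le_or_gt o (k + 1) with h2 | h2
            · have KE := R3 3 3 (k - 1) (o + 2 * k - 4) (by omega) (by omega) (by omega)
                (by omega) (by omega) (by omega)
              rwa [hψ3, hko (by omega)] at KE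
            · have KF := R3 3 (k - 1) (k - 1) (o + 2 * k - 4) (by omega) (by omega)
                (by omega) (by omega) (by omega) (by omega)
              rwa [hψ3, hko (by omega)] at KF
        exact finE3 (ψ o) (ψ (o + 2 * k - 4)) hoodd K1 K2 KA KX
  · -- ψ s odd
    have z1 : ψ (s - 1) = 0 := hmin (s - 1) (by omega) (by omega)
    have i0 := R3 (s-1) (s-1) (s-1) (3*s + k - 4) (by omega) (by omega) (by omega)
      (by omega) (by omega) (by omega)
    have i1 := R3 s (s-1) (s-1) (3*s + k - 4) (by omega) (by omega) (by omega)
      (by omega) (by omega) (by omega)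
    have i2 := R3 s s (s-1) (3*s + k - 4) (by omega) (by omega) (by omega)
      (by omega) (by omega) (by omega)
    have i3 := R3 s s s (3*s + k - 4) (by omega) (by omega) (by omega)
      (by omega) (by omega) (by omega)
    rw [z1] at i0 i1 i2
    exact finE0 (ψ s) (ψ (3*s + k - 4)) hwodd i0 i1 i2 i3

private lemma finO1 : ∀ B F H : ZMod 4, (B = 1 ∨ B = 3) → B + B + F + 2 ≠ 0 →
    0 + B + F + 2 ≠ 0 → 0 + 0 + F + 2 ≠ 0 → 0 + B + B + H + 2 ≠ 0 →
    0 + 0 + B + H + 2 ≠ 0 → 0 + 0 + 0 + H + 2 ≠ 0 → F + H + 2 ≠ 0 → False := by decide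
private lemma finO2 : ∀ D H : ZMod 4, D ≠ 0 → 2 + D ≠ 0 → 0 + 0 + 2 + H + 2 ≠ 0 →
    0 + 0 + 0 + H + 2 ≠ 0 → 0 + D + H + 2 ≠ 0 → 2 + D + H + 2 ≠ 0 → False := by decide
private lemma finO3 : ∀ A P G : ZMod 4, (A = 1 ∨ A = 3) → P + P + 0 + 2 ≠ 0 →
    P + 0 + 2 ≠ 0 → P + A + A + G + 2 ≠ 0 → A + 0 + G + 2 ≠ 0 → 0 + G + 2 ≠ 0 →
    A + A + A + G + 2 ≠ 0 → False := by decide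
private lemma finO4 : ∀ A C E Q H : ZMod 4, (A = 1 ∨ A = 3) → A + C = 0 →
    A + A + E + 2 ≠ 0 → A + E + 2 ≠ 0 → C + E + 2 ≠ 0 → Q + Q + E + 2 ≠ 0 →
    Q + C + 2 ≠ 0 → E + H + 2 ≠ 0 → Q + Q + C + H + 2 ≠ 0 → Q + C + H + 2 ≠ 0 →
    Q + A + A + H + 2 ≠ 0 → False := by decide
private lemma hCsplit : ∀ A C : ZMod 4, (A = 1 ∨ A = 3) → C + 2 ≠ 0 → A + C + 2 ≠ 0 →
    C = 0 ∨ A + C = 0 := by decide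
private lemma zmod4_cases' : ∀ a : ZMod 4, a = 0 ∨ a = 1 ∨ a = 2 ∨ a = 3 := by decide

private lemma caseO (m : ℕ) (hm : 2 ≤ m) (ψ : ℕ → ZMod 4)
    (R0e : ∀ y, 4*m ≤ y + 1 → y + 2 ≤ 8*m → y % 2 = 0 → ψ y ≠ 0)
    (R0o : ∀ y, 4*m ≤ y + 1 → y + 2 ≤ 8*m → y % 2 = 1 → ψ y + 2 ≠ 0)
    (R1e : ∀ n y, 1 ≤ n → n + 4*m ≤ y + 2 → y + 4 ≤ n + 8*m → y + 5 ≤ 16*m →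
      y % 2 = 0 → ψ n + ψ y ≠ 0)
    (R1o : ∀ n y, 1 ≤ n → n + 4*m ≤ y + 2 → y + 4 ≤ n + 8*m → y + 5 ≤ 16*m →
      y % 2 = 1 → ψ n + ψ y + 2 ≠ 0)
    (R2o : ∀ n1 n2 y, 1 ≤ n1 → 1 ≤ n2 → n1 + n2 + 4*m ≤ y + 3 →
      y + 6 ≤ n1 + n2 + 8*m → y + 5 ≤ 16*m → y % 2 = 1 → ψ n1 + ψ n2 + ψ y + 2 ≠ 0)
    (R3o : ∀ n1 n2 n3 y, 1 ≤ n1 → 1 ≤ n2 → 1 ≤ n3 → n1 + n2 + n3 + 4*m ≤ y + 4 →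
      y + 8 ≤ n1 + n2 + n3 + 8*m → y + 5 ≤ 16*m → y % 2 = 1 →
      ψ n1 + ψ n2 + ψ n3 + ψ y + 2 ≠ 0) :
    False := by
  have hA := R0o (4*m - 1) (by omega) (by omega) (by omega)
  have hB := R0e (4*m) (by omega) (by omega) (by omega)
  have oddA : (ψ (4*m - 1) = 1 ∨ ψ (4*m - 1) = 3) → False := by
    intro hAodd
    have hC0 := R0o (8*m - 3) (by omega) (by omega) (by omega)
    have hC1 := R1o (4*m - 1) (8*m - 3) (by omega) (by omega) (by omega) (by omega)
      (by omega)
    rcases hCsplit (ψ (4*m-1)) (ψ (8*m-3)) hAodd hC0 hC1 with hC | hC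
    · -- C = 0
      have hP1 := R2o 3 3 (8*m - 3) (by omega) (by omega) (by omega) (by omega)
        (by omega) (by omega)
      have hP2 := R1o 3 (8*m - 3) (by omega) (by omega) (by omega) (by omega) (by omega)
      have hG1 := R3o 3 (4*m-1) (4*m-1) (16*m - 7) (by omega) (by omega) (by omega)
        (by omega) (by omega) (by omega) (by omega)
      have hG2 := R2o (4*m-1) (8*m-3) (16*m - 7) (by omega) (by omega) (by omega)
        (by omega) (by omega) (by omega)
      have hG3 := R1o (8*m-3) (16*m - 7) (by omega) (by omega) (by omega) (by omega)
        (by omega)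
      have hG4 := R3o (4*m-1) (4*m-1) (4*m-1) (16*m - 7) (by omega) (by omega) (by omega)
        (by omega) (by omega) (by omega) (by omega)
      rw [hC] at hP1 hP2 hG2 hG3
      exact finO3 (ψ (4*m-1)) (ψ 3) (ψ (16*m-7)) hAodd hP1 hP2 hG1 hG2 hG3 hG4
    · -- A + C = 0
      have hE1 := R2o (4*m-1) (4*m-1) (12*m - 5) (by omega) (by omega) (by omega)
        (by omega) (by omega) (by omega)
      have hE2 := R1o (4*m-1) (12*m - 5) (by omega) (by omega) (by omega) (by omega)
        (by omega)
      have hE3 := R1o (8*m-3) (12*m - 5) (by omega) (by omega) (by omega) (by omega)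
        (by omega)
      have hQ1 := R2o (2*m+1) (2*m+1) (12*m - 5) (by omega) (by omega) (by omega)
        (by omega) (by omega) (by omega)
      have hQ2 := R1o (2*m+1) (8*m - 3) (by omega) (by omega) (by omega) (by omega)
        (by omega)
      have hH1 := R1o (12*m-5) (16*m - 5) (by omega) (by omega) (by omega) (by omega)
        (by omega)
      have hH2 := R3o (2*m+1) (2*m+1) (8*m-3) (16*m - 5) (by omega) (by omega) (by omega)
        (by omega) (by omega) (by omega) (by omega)
      have hH3 := R2o (2*m+1) (8*m-3) (16*m - 5) (by omega) (by omega) (by omega)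
        (by omega) (by omega) (by omega)
      have hH4 := R3o (2*m+1) (4*m-1) (4*m-1) (16*m - 5) (by omega) (by omega) (by omega)
        (by omega) (by omega) (by omega) (by omega)
      exact finO4 (ψ (4*m-1)) (ψ (8*m-3)) (ψ (12*m-5)) (ψ (2*m+1)) (ψ (16*m-5))
        hAodd hC hE1 hE2 hE3 hQ1 hQ2 hH1 hH2 hH3 hH4
  have zeroA : ψ (4*m - 1) = 0 → False := by
    intro hA0
    have oddB : (ψ (4*m) = 1 ∨ ψ (4*m) = 3) → False := by
      intro hBodd
      have hF1 := R2o (4*m) (4*m) (12*m - 3) (by omega) (by omega) (by omega) (by omega)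
        (by omega) (by omega)
      have hF2 := R2o (4*m-1) (4*m) (12*m - 3) (by omega) (by omega) (by omega)
        (by omega) (by omega) (by omega)
      have hF3 := R2o (4*m-1) (4*m-1) (12*m - 3) (by omega) (by omega) (by omega)
        (by omega) (by omega) (by omega)
      have hH1 := R3o (4*m-1) (4*m) (4*m) (16*m - 5) (by omega) (by omega) (by omega)
        (by omega) (by omega) (by omega) (by omega)
      have hH2 := R3o (4*m-1) (4*m-1) (4*m) (16*m - 5) (by omega) (by omega) (by omega)
        (by omega) (by omega) (by omega) (by omega)
      have hH3 := R3o (4*m-1) (4*m-1) (4*m-1) (16*m - 5) (by omega) (by omega) (by omega)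
        (by omega) (by omega) (by omega) (by omega)
      have hH4 := R1o (12*m-3) (16*m - 5) (by omega) (by omega) (by omega) (by omega)
        (by omega)
      rw [hA0] at hF2 hF3 hH1 hH2 hH3
      exact finO1 (ψ (4*m)) (ψ (12*m-3)) (ψ (16*m-5)) hBodd hF1 hF2 hF3 hH1 hH2 hH3 hH4
    rcases zmod4_cases' (ψ (4*m)) with hB0 | hB1 | hB2 | hB3
    · exact hB hB0
    · exact oddB (Or.inl hB1)
    · -- B = 2
      have hD := R0e (8*m - 2) (by omega) (by omega) (by omega)
      have hD2 := R1e (4*m) (8*m - 2) (by omega) (by omega) (by omega) (by omega)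
        (by omega)
      have hH1 := R3o (4*m-1) (4*m-1) (4*m) (16*m - 5) (by omega) (by omega) (by omega)
        (by omega) (by omega) (by omega) (by omega)
      have hH2 := R3o (4*m-1) (4*m-1) (4*m-1) (16*m - 5) (by omega) (by omega) (by omega)
        (by omega) (by omega) (by omega) (by omega)
      have hH3 := R2o (4*m-1) (8*m-2) (16*m - 5) (by omega) (by omega) (by omega)
        (by omega) (by omega) (by omega)
      have hH4 := R2o (4*m) (8*m-2) (16*m - 5) (by omega) (by omega) (by omega)
        (by omega) (by omega) (by omega)
      rw [hB2] at hD2 hH1 hH4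
      rw [hA0] at hH1 hH2 hH3
      exact finO2 (ψ (8*m-2)) (ψ (16*m-5)) hD hD2 hH1 hH2 hH3 hH4
    · exact oddB (Or.inr hB3)
  rcases zmod4_cases' (ψ (4*m - 1)) with h | h | h | h
  · exact zeroA h
  · exact oddA (Or.inl h)
  · exact hA (by rw [h]; decide)
  · exact oddA (Or.inr h)

theorem zero_sum_schur_upper_four (k : ℕ) (hdvd : 4 ∣ k) (hk : 8 ≤ k)
    (χ : ℕ → ZMod 4) :
    hasZeroSumSolution k 4 (4 * k - 5) χ := by
  obtain ⟨m, rfl⟩ := hdvd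
  have hm : 2 ≤ m := by omega
  by_contra hcon
  unfold hasZeroSumSolution at hcon
  have RULE : ∀ (L : List ℕ) (u c y : ℕ),
      (∀ n ∈ L, 1 ≤ n ∧ n ≤ 4 * (4 * m) - 5) →
      c + L.length + u + 1 = 4 * m →
      y = c + 2 * u + L.sum →
      1 ≤ y → y ≤ 4 * (4 * m) - 5 →
      (L.map χ).sum + (u : ZMod 4) * χ 2 + (c : ZMod 4) * χ 1 + χ y ≠ 0 := by
    intro L u c y hL hlen hy hy1 hyN hEq
    apply hcon
    set M : List ℕ := L ++ List.replicate u 2 ++ List.replicate c 1 with hM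
    have hMlen : M.length = 4 * m - 1 := by
      rw [hM]
      simp only [List.length_append, List.length_replicate]
      omega
    refine ⟨fun i => M.getD i 1, y, ?_, ⟨hy1, hyN⟩, ?_, ?_⟩
    · intro i
      show 1 ≤ M.getD (i : ℕ) 1 ∧ M.getD (i : ℕ) 1 ≤ 4 * (4 * m) - 5
      have hbound : ∀ x : ℕ, x ∈ M → 1 ≤ x ∧ x ≤ 4 * (4 * m) - 5 := by
        intro x hx
        rw [hM] at hx
        rcases List.mem_append.mp hx with h' | h'
        · rcases List.mem_append.mp h' with h'' | h''
          · exact ⟨(hL _ h'').1, (hL _ h'').2⟩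
          · have := List.eq_of_mem_replicate h''; omega
        · have := List.eq_of_mem_replicate h'; omega
      rcases getD_cases M (i : ℕ) with h | h
      · rw [h]; omega
      · exact hbound _ h
    · calc ∑ i : Fin (4 * m - 1), M.getD (i : ℕ) 1
          = ∑ i ∈ Finset.range (4 * m - 1), M.getD i 1 :=
            Fin.sum_univ_eq_sum_range (fun j => M.getD j 1) (4 * m - 1)
        _ = (M.map id).sum := sum_range_getD id M (4 * m - 1) hMlen
        _ = M.sum := by rw [List.map_id]
        _ = y := by
            rw [hM]
            simp only [List.sum_append, List.sum_replicate, smul_eq_mul]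
            omega
    · have h1 : ∑ i : Fin (4 * m - 1), χ (M.getD (i : ℕ) 1) = (M.map χ).sum := by
        rw [Fin.sum_univ_eq_sum_range (fun j => χ (M.getD j 1)) (4 * m - 1)]
        exact sum_range_getD χ M (4 * m - 1) hMlen
      rw [h1, hM]
      simp only [List.map_append, List.sum_append, List.map_replicate,
        List.sum_replicate, nsmul_eq_mul]
      linear_combination hEq
  -- the normalized coloring ψ
  let z : ZMod 4 := χ 1
  let p : ZMod 4 := χ 2 - χ 1
  let ψ : ℕ → ZMod 4 := fun n => χ n - z - ((n : ZMod 4) - 1) * p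
  have hz : z = χ 1 := rfl
  have hpd : p = χ 2 - χ 1 := rfl
  have hψn : ∀ n, ψ n = χ n - z - ((n : ZMod 4) - 1) * p := fun _ => rfl
  have hψ1 : ψ 1 = 0 := by rw [hψn 1, hz]; push_cast; ring
  have hψ2 : ψ 2 = 0 := by rw [hψn 2, hz, hpd]; push_cast; ring
  have CHI : ∀ n, χ n = ψ n + z + ((n : ZMod 4) - 1) * p := fun n => by rw [hψn]; ring
  have hχ1 : χ 1 = z := rfl
  have hχ2 : χ 2 = z + p := by rw [hz, hpd]; ring
  have h40 : (4 : ZMod 4) = 0 := by decide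
  have MAPPSI : ∀ L : List ℕ, (L.map χ).sum =
      (L.map ψ).sum + (L.length : ZMod 4) * z +
      (((L.sum : ℕ) : ZMod 4) - (L.length : ZMod 4)) * p := by
    intro L
    induction L with
    | nil => simp
    | cons a T ih =>
      simp only [List.map_cons, List.sum_cons, List.length_cons]
      rw [ih, CHI a]
      push_cast
      ring
  have PSIRULE : ∀ (L : List ℕ) (u c y : ℕ),
      (∀ n ∈ L, 1 ≤ n ∧ n ≤ 4 * (4 * m) - 5) →
      c + L.length + u + 1 = 4 * m →
      y = c + 2 * u + L.sum →
      1 ≤ y → y ≤ 4 * (4 * m) - 5 →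
      (L.map ψ).sum + ψ y + 2 * (y : ZMod 4) * p ≠ 0 := by
    intro L u c y hL hlen hy hy1 hyN hEq
    apply RULE L u c y hL hlen hy hy1 hyN
    have e1 : (c : ZMod 4) + (L.length : ZMod 4) + (u : ZMod 4) + 1 = 0 := by
      have h := congrArg (Nat.cast : ℕ → ZMod 4) hlen
      push_cast at h
      rw [h40] at h
      linear_combination h
    have e2 : (y : ZMod 4) = (c : ZMod 4) + 2 * (u : ZMod 4) + ((L.sum : ℕ) : ZMod 4) := by
      rw [hy]
      push_cast
      ring
    rw [MAPPSI L, hχ2, hχ1, CHI y]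
    linear_combination hEq + (z - p) * e1 - p * e2
  have R0' : ∀ y, 4*m ≤ y + 1 → y + 2 ≤ 8*m → ψ y + 2 * (y : ZMod 4) * p ≠ 0 := by
    intro y h1 h2 hEq
    refine PSIRULE [] (y + 1 - 4*m) (8*m - 2 - y) y (by simp) (by simp; omega)
      (by simp; omega) (by omega) (by omega) ?_
    simpa using hEq
  have R1' : ∀ n y, 1 ≤ n → n + 4*m ≤ y + 2 → y + 4 ≤ n + 8*m → y + 5 ≤ 16*m →
      ψ n + ψ y + 2 * (y : ZMod 4) * p ≠ 0 := by
    intro n y a b c d hEq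
    refine PSIRULE [n] (y + 2 - n - 4*m) (4*m - 2 - (y + 2 - n - 4*m)) y
      (by intro x hx; rw [List.mem_singleton] at hx; subst hx; omega)
      (by simp; omega) (by simp; omega) (by omega) (by omega) ?_
    simp only [List.map_cons, List.map_nil, List.sum_cons, List.sum_nil, add_zero]
    exact hEq
  have R2' : ∀ n1 n2 y, 1 ≤ n1 → 1 ≤ n2 → n1 + n2 + 4*m ≤ y + 3 →
      y + 6 ≤ n1 + n2 + 8*m → y + 5 ≤ 16*m →
      ψ n1 + ψ n2 + ψ y + 2 * (y : ZMod 4) * p ≠ 0 := by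
    intro n1 n2 y a b c d e hEq
    refine PSIRULE [n1, n2] (y + 3 - (n1 + n2) - 4*m) (4*m - 3 - (y + 3 - (n1+n2) - 4*m)) y
      ?_ (by simp; omega) (by simp; omega) (by omega) (by omega) ?_
    · intro x hx
      simp only [List.mem_cons, List.mem_singleton, List.not_mem_nil, or_false] at hx
      rcases hx with rfl | rfl <;> omega
    · simp only [List.map_cons, List.map_nil, List.sum_cons, List.sum_nil, add_zero]
      linear_combination hEq
  have R3' : ∀ n1 n2 n3 y, 1 ≤ n1 → 1 ≤ n2 → 1 ≤ n3 → n1 + n2 + n3 + 4*m ≤ y + 4 →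
      y + 8 ≤ n1 + n2 + n3 + 8*m → y + 5 ≤ 16*m →
      ψ n1 + ψ n2 + ψ n3 + ψ y + 2 * (y : ZMod 4) * p ≠ 0 := by
    intro n1 n2 n3 y a b c d e f hEq
    refine PSIRULE [n1, n2, n3] (y + 4 - (n1 + n2 + n3) - 4*m)
      (4*m - 4 - (y + 4 - (n1+n2+n3) - 4*m)) y
      ?_ (by simp; omega) (by simp; omega) (by omega) (by omega) ?_
    · intro x hx
      simp only [List.mem_cons, List.mem_singleton, List.not_mem_nil, or_false] at hx
      rcases hx with rfl | rfl | rfl <;> omega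
    · simp only [List.map_cons, List.map_nil, List.sum_cons, List.sum_nil, add_zero]
      linear_combination hEq
  have hcase : 2 * p = 0 ∨ 2 * p = 2 := (by decide : ∀ q : ZMod 4, 2*q = 0 ∨ 2*q = 2) p
  rcases hcase with hp0 | hp2
  · have he : ∀ y : ℕ, 2 * (y : ZMod 4) * p = 0 := fun y => by
      calc 2 * (y : ZMod 4) * p = (y : ZMod 4) * (2 * p) := by ring
        _ = 0 := by rw [hp0, mul_zero]
    exact caseE (4*m) (by omega) ψ hψ1 hψ2
      (fun y h1 h2 => by
        have := R0' y (by omega) (by omega); rw [he y] at this; simpa using this)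
      (fun n y a b c d => by
        have := R1' n y (by omega) (by omega) (by omega) (by omega)
        rw [he y] at this; simpa using this)
      (fun n1 n2 y a b c d e => by
        have := R2' n1 n2 y (by omega) (by omega) (by omega) (by omega) (by omega)
        rw [he y] at this; simpa using this)
      (fun n1 n2 n3 y a b c d e f => by
        have := R3' n1 n2 n3 y (by omega) (by omega) (by omega) (by omega) (by omega)
          (by omega)
        rw [he y] at this; simpa using this)
  · have hoY : ∀ y : ℕ, y % 2 = 1 → 2 * (y : ZMod 4) * p = 2 := by
      intro y hy
      obtain ⟨t, rfl⟩ : ∃ t, y = 2 * t + 1 := ⟨y / 2, by omega⟩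
      push_cast
      linear_combination (t : ZMod 4) * p * h40 + hp2
    have heY : ∀ y : ℕ, y % 2 = 0 → 2 * (y : ZMod 4) * p = 0 := by
      intro y hy
      obtain ⟨t, rfl⟩ : ∃ t, y = 2 * t := ⟨y / 2, by omega⟩
      push_cast
      linear_combination (t : ZMod 4) * p * h40
    exact caseO m hm ψ
      (fun y h1 h2 hpar => by
        have := R0' y (by omega) (by omega); rw [heY y hpar] at this; simpa using this)
      (fun y h1 h2 hpar => by
        have := R0' y (by omega) (by omega); rw [hoY y hpar] at this; exact this)
      (fun n y a b c d hpar => by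
        have := R1' n y (by omega) (by omega) (by omega) (by omega)
        rw [heY y hpar] at this; simpa using this)
      (fun n y a b c d hpar => by
        have := R1' n y (by omega) (by omega) (by omega) (by omega)
        rw [hoY y hpar] at this; exact this)
      (fun n1 n2 y a b c d e hpar => by
        have := R2' n1 n2 y (by omega) (by omega) (by omega) (by omega) (by omega)
        rw [hoY y hpar] at this; exact this)
      (fun n1 n2 n3 y a b c d e f hpar => by
        have := R3' n1 n2 n3 y (by omega) (by omega) (by omega) (by omega) (by omega)
          (by omega)
        rw [hoY y hpar] at this; exact this)
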